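/- arXiv:1504.01931 — 3 statements merged into one kernel-verified Lean document; each statement's English description precedes it below -/
import Mathlib

section
/- For all multivariate polynomials f, g, p ∈ k[X_i : i ∈ ι] and every natural number N, one has Σ_{a+b=N} m_a(m_b(f,g), p) = Σ_{a+b=N} m_a(f, m_b(g,p)). Equivalently, the Moyal star product f ⋆ g = Σ_{n≥0} hⁿ m_n(f,g) is an associative product on k[X_i : i ∈ ι][[h]]. -/
open MvPolynomial

/-- Iterated partial derivative along a tuple of variable indices. -/
noncomputable def iterPDeriv {k : Type*} [CommRing k] {ι : Type*} {n : ℕ}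
    (v : Fin n → ι) (f : MvPolynomial ι k) : MvPolynomial ι k :=
  (List.ofFn v).foldl (fun g i => MvPolynomial.pderiv i g) f

/-- The `n`-th Moyal bidifferential operator
`m_n(f,g) = (1/n!) · Σ_{((i₁,j₁),…,(iₙ,jₙ)) ∈ (ι×ι)ⁿ} (∏ₜ ω(iₜ,jₜ)) ·
  (∂_{i₁}⋯∂_{iₙ} f) · (∂_{j₁}⋯∂_{jₙ} g)`. -/
noncomputable def moyalTerm {k : Type*} [Field k] {ι : Type*} [Fintype ι]
    (ω : ι → ι → k) (n : ℕ) (f g : MvPolynomial ι k) : MvPolynomial ι k :=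
  (n.factorial : k)⁻¹ •
    ∑ p : Fin n → ι × ι,
      (∏ t, ω (p t).1 (p t).2) •
        (iterPDeriv (fun t => (p t).1) f * iterPDeriv (fun t => (p t).2) g)

namespace MoyalAux

open Finset

set_option linter.unusedSectionVars false

variable {k : Type*} [Field k] {ι : Type*} [Fintype ι]

lemma pderiv_comm' {σ : Type*} (a b : σ) (f : MvPolynomial σ k) :
    pderiv a (pderiv b f) = pderiv b (pderiv a f) := by
  classical
  induction f using MvPolynomial.induction_on with
  | C c => simp
  | add p q hp hq => simp [hp, hq]
  | mul_X p n ih =>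
    rcases eq_or_ne n a with rfl | ha <;> rcases eq_or_ne n b with rfl | hb <;>
      simp [pderiv_mul, pderiv_X_self, pderiv_X_of_ne, ih, *] <;> ring

lemma pderiv_rename_sum {σ τ : Type*} [Fintype σ] [DecidableEq τ] (r : σ → τ) (j : τ)
    (x : MvPolynomial σ k) :
    pderiv j (rename r x) = ∑ s : σ, if r s = j then rename r (pderiv s x) else 0 := by
  classical
  induction x using MvPolynomial.induction_on with
  | C c => simp
  | add p q hp hq =>
    simp only [map_add, hp, hq, ← Finset.sum_add_distrib]
    exact Finset.sum_congr rfl fun s _ => by split <;> simp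
  | mul_X p n ih =>
    have key : ∀ s : σ, (if r s = j then rename r (pderiv s p * X n + p * pderiv s (X n)) else 0)
        = (if r s = j then rename r (pderiv s p) else 0) * X (r n)
          + (if s = n then (if r n = j then rename r p else 0) else 0) := by
      intro s
      rcases eq_or_ne s n with rfl | hs
      · split <;> rename_i hh <;> simp [hh, pderiv_X_self]
      · simp [pderiv_X_of_ne (Ne.symm hs), hs]
    simp only [map_mul, rename_X, pderiv_mul, ih, Finset.sum_mul, key, Finset.sum_add_distrib,
      Finset.sum_ite_eq' Finset.univ n, Finset.mem_univ, if_true]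
    rw [pderiv_X, Pi.single_apply]
    split <;> simp

/-- partial derivative as a linear endomorphism -/
noncomputable def pd {σ : Type*} (v : σ) : Module.End k (MvPolynomial σ k) :=
  (pderiv v).toLinearMap

@[simp] lemma pd_apply {σ : Type*} (v : σ) (f : MvPolynomial σ k) : pd v f = pderiv v f := rfl

lemma pd_commute {σ : Type*} (a b : σ) : Commute (pd (k := k) a) (pd b) :=
  LinearMap.ext fun f => pderiv_comm' a b f

/-- the bidifferential operator pairing slot `s` against slot `t` -/
noncomputable def DD {σ : Type*} (ω : ι → ι → k) (s t : σ) :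
    Module.End k (MvPolynomial (σ × ι) k) :=
  ∑ ij : ι × ι, ω ij.1 ij.2 • (pd (s, ij.1) * pd (t, ij.2))

/-- embedding into slot `s` -/
noncomputable def ins {σ : Type*} (s : σ) : MvPolynomial ι k →ₐ[k] MvPolynomial (σ × ι) k :=
  rename fun i => (s, i)

/-- collapse all slots -/
noncomputable def prj {σ : Type*} : MvPolynomial (σ × ι) k →ₐ[k] MvPolynomial ι k :=
  rename Prod.snd

@[simp] lemma prj_ins {σ : Type*} (s : σ) (f : MvPolynomial ι k) :
    prj (k := k) (ins s f) = f := by simp [prj, ins, rename_rename]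

lemma pderiv_ins {σ : Type*} [DecidableEq σ] (s t : σ) (i : ι) (f : MvPolynomial ι k) :
    pderiv (t, i) (ins (k := k) s f) = if t = s then ins s (pderiv i f) else 0 := by
  classical
  rw [ins, pderiv_rename_sum]
  rcases eq_or_ne t s with rfl | h
  · simp [Prod.ext_iff, Finset.sum_ite_eq' Finset.univ i]
  · simp [Prod.ext_iff, Ne.symm h, h]

lemma DD_commute {σ : Type*} (ω : ι → ι → k) (s t s' t' : σ) :
    Commute (DD ω s t) (DD ω s' t') := by
  unfold DD
  refine Commute.sum_left _ _ _ fun ij _ => Commute.sum_right _ _ _ fun ij' _ => ?_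
  refine Commute.smul_left (Commute.smul_right ?_ _) _
  exact ((pd_commute (s, ij.1) (s', ij'.1)).mul_right (pd_commute (s, ij.1) (t', ij'.2))).mul_left
    ((pd_commute (t, ij.2) (s', ij'.1)).mul_right (pd_commute (t, ij.2) (t', ij'.2)))

lemma iterPDeriv_cons {n : ℕ} (x : ι) (v : Fin n → ι) (f : MvPolynomial ι k) :
    iterPDeriv (Fin.cons x v) f = iterPDeriv v (pderiv x f) := by
  simp [iterPDeriv, List.ofFn_succ]

lemma sum_pi_fin_succ {X : Type*} [Fintype X] {M : Type*} [AddCommMonoid M] {n : ℕ}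
    (F : (Fin (n + 1) → X) → M) :
    ∑ p : Fin (n + 1) → X, F p = ∑ x : X, ∑ q : Fin n → X, F (Fin.cons x q) := by
  calc ∑ p : Fin (n + 1) → X, F p
      = ∑ xq : X × (Fin n → X), F (Fin.cons xq.1 xq.2) :=
        Fintype.sum_equiv (Fin.consEquiv (fun _ => X)).symm _ _ fun p => by
          simpa [Fin.consEquiv, Fin.tail] using congrArg F (Fin.cons_self_tail p).symm
    _ = ∑ x : X, ∑ q : Fin n → X, F (Fin.cons x q) := Fintype.sum_prod_type _

lemma DD_ins_mul {σ : Type*} (ω : ι → ι → k) {s t : σ} (h : s ≠ t)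
    (F G : MvPolynomial ι k) :
    DD ω s t (ins s F * ins t G)
      = ∑ ij : ι × ι, ω ij.1 ij.2 • (ins s (pderiv ij.1 F) * ins t (pderiv ij.2 G)) := by
  classical
  rw [DD, LinearMap.sum_apply]
  refine Finset.sum_congr rfl fun ij _ => ?_
  rw [LinearMap.smul_apply, Module.End.mul_apply]
  congr 1
  simp [pderiv_mul, pderiv_ins, h, Ne.symm h, mul_comm]

lemma DD_pow_ins_mul {σ : Type*} (ω : ι → ι → k) {s t : σ} (h : s ≠ t)
    (n : ℕ) (F G : MvPolynomial ι k) :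
    (DD ω s t ^ n) (ins s F * ins t G)
      = ∑ p : Fin n → ι × ι, (∏ u, ω (p u).1 (p u).2) •
          (ins s (iterPDeriv (fun u => (p u).1) F) * ins t (iterPDeriv (fun u => (p u).2) G)) := by
  induction n generalizing F G with
  | zero => simp [iterPDeriv, Unique.eq_default (α := Fin 0 → ι × ι)]
  | succ n ih =>
    rw [pow_succ, Module.End.mul_apply, DD_ins_mul ω h, map_sum]
    rw [sum_pi_fin_succ]
    refine Finset.sum_congr rfl fun ij _ => ?_
    rw [LinearMap.map_smul, ih]
    rw [Finset.smul_sum]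
    refine Finset.sum_congr rfl fun q _ => ?_
    rw [smul_smul]
    congr 1
    · rw [Fin.prod_univ_succ]
      simp
    · congr 1
      · have : (fun u => ((Fin.cons ij q : Fin (n+1) → ι × ι) u).1)
            = Fin.cons ij.1 (fun u => (q u).1) := funext (Fin.cases rfl fun i => rfl)
        rw [this, iterPDeriv_cons]
      · have : (fun u => ((Fin.cons ij q : Fin (n+1) → ι × ι) u).2)
            = Fin.cons ij.2 (fun u => (q u).2) := funext (Fin.cases rfl fun i => rfl)
        rw [this, iterPDeriv_cons]

lemma moyalTerm_eq {σ : Type*} (ω : ι → ι → k) {s t : σ} (h : s ≠ t)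
    (n : ℕ) (F G : MvPolynomial ι k) :
    moyalTerm ω n F G = (n.factorial : k)⁻¹ • prj ((DD ω s t ^ n) (ins s F * ins t G)) := by
  rw [DD_pow_ins_mul ω h, moyalTerm, map_sum]
  congr 1
  refine Finset.sum_congr rfl fun p _ => ?_
  rw [map_smul, map_mul, prj_ins, prj_ins]

/-- renaming of slots -/
noncomputable def ren {m n : ℕ} (e : Fin m → Fin n) :
    MvPolynomial (Fin m × ι) k →ₐ[k] MvPolynomial (Fin n × ι) k :=
  rename (Prod.map e id)

lemma pderiv_ren {m n : ℕ} (e : Fin m → Fin n) (s : Fin n) (i : ι)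
    (x : MvPolynomial (Fin m × ι) k) :
    pderiv (s, i) (ren (k := k) e x)
      = ∑ t : Fin m, if e t = s then ren e (pderiv (t, i) x) else 0 := by
  classical
  rw [ren, pderiv_rename_sum, Fintype.sum_prod_type]
  refine Finset.sum_congr rfl fun t _ => ?_
  rcases eq_or_ne (e t) s with h | h
  · simp [h, Prod.ext_iff, Finset.sum_ite_eq' Finset.univ i]
  · simp [h, Prod.ext_iff]

lemma DD_merge01 (ω : ι → ι → k) (x : MvPolynomial (Fin 3 × ι) k) :
    DD ω (0 : Fin 2) 1 (ren ![0, 0, 1] x)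
      = ren ![0, 0, 1] ((DD ω (0 : Fin 3) 2 + DD ω 1 2 :
          Module.End k (MvPolynomial (Fin 3 × ι) k)) x) := by
  have h1 : ∀ (j : ι) (y : MvPolynomial (Fin 3 × ι) k),
      pderiv ((1 : Fin 2), j) (ren (k := k) ![0, 0, 1] y)
        = ren ![0, 0, 1] (pderiv ((2 : Fin 3), j) y) := by
    intro j y; rw [pderiv_ren, Fin.sum_univ_three]; simp
  have h0 : ∀ (i : ι) (y : MvPolynomial (Fin 3 × ι) k),
      pderiv ((0 : Fin 2), i) (ren (k := k) ![0, 0, 1] y)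
        = ren ![0, 0, 1] (pderiv ((0 : Fin 3), i) y)
          + ren ![0, 0, 1] (pderiv ((1 : Fin 3), i) y) := by
    intro i y; rw [pderiv_ren, Fin.sum_univ_three]; simp
  rw [LinearMap.add_apply, map_add, DD, DD, DD, LinearMap.sum_apply, LinearMap.sum_apply,
    LinearMap.sum_apply, map_sum, map_sum, ← Finset.sum_add_distrib]
  refine Finset.sum_congr rfl fun ij _ => ?_
  simp only [LinearMap.smul_apply, Module.End.mul_apply, pd_apply, h1, h0, map_add, map_smul,
    smul_add]

lemma DD_merge12 (ω : ι → ι → k) (x : MvPolynomial (Fin 3 × ι) k) :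
    DD ω (0 : Fin 2) 1 (ren ![0, 1, 1] x)
      = ren ![0, 1, 1] ((DD ω (0 : Fin 3) 1 + DD ω 0 2 :
          Module.End k (MvPolynomial (Fin 3 × ι) k)) x) := by
  have h1 : ∀ (j : ι) (y : MvPolynomial (Fin 3 × ι) k),
      pderiv ((1 : Fin 2), j) (ren (k := k) ![0, 1, 1] y)
        = ren ![0, 1, 1] (pderiv ((1 : Fin 3), j) y)
          + ren ![0, 1, 1] (pderiv ((2 : Fin 3), j) y) := by
    intro j y; rw [pderiv_ren, Fin.sum_univ_three]; simp
  have h0 : ∀ (i : ι) (y : MvPolynomial (Fin 3 × ι) k),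
      pderiv ((0 : Fin 2), i) (ren (k := k) ![0, 1, 1] y)
        = ren ![0, 1, 1] (pderiv ((0 : Fin 3), i) y) := by
    intro i y; rw [pderiv_ren, Fin.sum_univ_three]; simp
  rw [LinearMap.add_apply, map_add, DD, DD, DD, LinearMap.sum_apply, LinearMap.sum_apply,
    LinearMap.sum_apply, map_sum, map_sum, ← Finset.sum_add_distrib]
  refine Finset.sum_congr rfl fun ij _ => ?_
  simp only [LinearMap.smul_apply, Module.End.mul_apply, pd_apply, h1, h0, map_add, map_smul,
    smul_add]

lemma DD_embed01 (ω : ι → ι → k) (x : MvPolynomial (Fin 2 × ι) k) :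
    DD ω (0 : Fin 3) 1 (ren ![0, 1] x) = ren ![0, 1] (DD ω (0 : Fin 2) 1 x) := by
  have h0 : ∀ (i : ι) (y : MvPolynomial (Fin 2 × ι) k),
      pderiv ((0 : Fin 3), i) (ren (k := k) ![0, 1] y)
        = ren ![0, 1] (pderiv ((0 : Fin 2), i) y) := by
    intro i y; rw [pderiv_ren, Fin.sum_univ_two]; simp
  have h1 : ∀ (j : ι) (y : MvPolynomial (Fin 2 × ι) k),
      pderiv ((1 : Fin 3), j) (ren (k := k) ![0, 1] y)
        = ren ![0, 1] (pderiv ((1 : Fin 2), j) y) := by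
    intro j y; rw [pderiv_ren, Fin.sum_univ_two]; simp
  rw [DD, DD, LinearMap.sum_apply, LinearMap.sum_apply, map_sum]
  refine Finset.sum_congr rfl fun ij _ => ?_
  simp only [LinearMap.smul_apply, Module.End.mul_apply, pd_apply, h0, h1, map_smul]

lemma DD_embed12 (ω : ι → ι → k) (x : MvPolynomial (Fin 2 × ι) k) :
    DD ω (1 : Fin 3) 2 (ren ![1, 2] x) = ren ![1, 2] (DD ω (0 : Fin 2) 1 x) := by
  have h0 : ∀ (i : ι) (y : MvPolynomial (Fin 2 × ι) k),
      pderiv ((1 : Fin 3), i) (ren (k := k) ![1, 2] y)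
        = ren ![1, 2] (pderiv ((0 : Fin 2), i) y) := by
    intro i y; rw [pderiv_ren, Fin.sum_univ_two]; simp
  have h1 : ∀ (j : ι) (y : MvPolynomial (Fin 2 × ι) k),
      pderiv ((2 : Fin 3), j) (ren (k := k) ![1, 2] y)
        = ren ![1, 2] (pderiv ((1 : Fin 2), j) y) := by
    intro j y; rw [pderiv_ren, Fin.sum_univ_two]; simp
  rw [DD, DD, LinearMap.sum_apply, LinearMap.sum_apply, map_sum]
  refine Finset.sum_congr rfl fun ij _ => ?_
  simp only [LinearMap.smul_apply, Module.End.mul_apply, pd_apply, h0, h1, map_smul]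

lemma pow_transfer {M N : Type*} [AddCommMonoid M] [AddCommMonoid N] [Module k M] [Module k N]
    (A : Module.End k M) (B : Module.End k N) (φ : M →ₗ[k] N)
    (h : ∀ x, B (φ x) = φ (A x)) (n : ℕ) (x : M) : (B ^ n) (φ x) = φ ((A ^ n) x) := by
  induction n generalizing x with
  | zero => simp
  | succ n ih => rw [pow_succ, pow_succ, Module.End.mul_apply, Module.End.mul_apply, h, ih]

lemma DD_mul_ins {σ : Type*} [DecidableEq σ] (ω : ι → ι → k) {s t u : σ}
    (hs : s ≠ u) (ht : t ≠ u) (y : MvPolynomial (σ × ι) k) (q : MvPolynomial ι k) :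
    DD ω s t (y * ins u q) = DD ω s t y * ins u q := by
  rw [DD, LinearMap.sum_apply, LinearMap.sum_apply, Finset.sum_mul]
  refine Finset.sum_congr rfl fun ij _ => ?_
  simp only [LinearMap.smul_apply, Module.End.mul_apply, pd_apply, pderiv_mul,
    pderiv_ins, hs, ht, if_false, mul_zero, add_zero, smul_mul_assoc]

lemma DD_pow_mul_ins {σ : Type*} [DecidableEq σ] (ω : ι → ι → k) {s t u : σ}
    (hs : s ≠ u) (ht : t ≠ u) (n : ℕ) (y : MvPolynomial (σ × ι) k) (q : MvPolynomial ι k) :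
    (DD ω s t ^ n) (y * ins u q) = (DD ω s t ^ n) y * ins u q := by
  induction n generalizing y with
  | zero => simp
  | succ n ih => rw [pow_succ, Module.End.mul_apply, Module.End.mul_apply,
      DD_mul_ins ω hs ht, ih]

lemma DD_pow_ins_mul_left {σ : Type*} [DecidableEq σ] (ω : ι → ι → k) {s t u : σ}
    (hs : s ≠ u) (ht : t ≠ u) (n : ℕ) (y : MvPolynomial (σ × ι) k) (q : MvPolynomial ι k) :
    (DD ω s t ^ n) (ins u q * y) = ins u q * (DD ω s t ^ n) y := by
  rw [mul_comm, DD_pow_mul_ins ω hs ht, mul_comm]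

lemma binom_combine [CharZero k] {V W : Type*} [AddCommMonoid V] [AddCommMonoid W]
    [Module k V] [Module k W]
    {U U' : Module.End k V} (h : Commute U U') (φ : V →ₗ[k] W) (T : V) (N : ℕ) :
    ∑ ab ∈ Finset.HasAntidiagonal.antidiagonal N,
        ((ab.1.factorial * ab.2.factorial : k))⁻¹ • φ ((U ^ ab.1) ((U' ^ ab.2) T))
      = (N.factorial : k)⁻¹ • φ (((U + U') ^ N) T) := by
  rw [Finset.Nat.sum_antidiagonal_eq_sum_range_succ
    (fun a b => ((a.factorial * b.factorial : k))⁻¹ • φ ((U ^ a) ((U' ^ b) T)))]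
  rw [h.add_pow, LinearMap.sum_apply, map_sum, Finset.smul_sum]
  refine Finset.sum_congr rfl fun m hm => ?_
  have hmN : m ≤ N := Nat.lt_succ_iff.mp (Finset.mem_range.mp hm)
  have : ((U ^ m * U' ^ (N - m) * (N.choose m : Module.End k V))) T
      = (N.choose m : ℕ) • (U ^ m) ((U' ^ (N - m)) T) := by
    rw [Module.End.mul_apply, Module.End.mul_apply, Module.End.natCast_apply]
    rw [map_nsmul, map_nsmul]
  rw [this, map_nsmul, smul_comm, ← Nat.cast_smul_eq_nsmul k, smul_smul]
  congr 1
  have key : (N.choose m) * m.factorial * (N - m).factorial = N.factorial :=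
    Nat.choose_mul_factorial_mul_factorial hmN
  have h1 : (m.factorial : k) ≠ 0 := Nat.cast_ne_zero.mpr (Nat.factorial_ne_zero m)
  have h2 : ((N - m).factorial : k) ≠ 0 := Nat.cast_ne_zero.mpr (Nat.factorial_ne_zero _)
  have h3 : (N.factorial : k) ≠ 0 := Nat.cast_ne_zero.mpr (Nat.factorial_ne_zero _)
  field_simp
  have := congrArg (Nat.cast : ℕ → k) key.symm
  push_cast at this
  linear_combination this

lemma ren_ins_eq {m n : ℕ} (e : Fin m → Fin n) (s : Fin m) (q : MvPolynomial ι k) :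
    ren (k := k) e (ins s q) = ins (e s) q := by
  simp only [ins, ren, rename_rename]
  exact congrArg (fun r => rename r q) (funext fun i => rfl)

lemma prj_ren_eq {m n : ℕ} (e : Fin m → Fin n) (u : MvPolynomial (Fin m × ι) k) :
    prj (k := k) (ren e u) = prj u := by
  simp only [prj, ren, rename_rename]
  exact congrArg (fun r => rename r u) (funext fun q => rfl)

lemma lhs_term (ω : ι → ι → k) (f g p : MvPolynomial ι k) (a b : ℕ) :
    moyalTerm ω a (moyalTerm ω b f g) p
      = ((a.factorial : k) * (b.factorial : k))⁻¹ •
          prj ((((DD ω (0 : Fin 3) 2 + DD ω 1 2) : Module.End k _) ^ a)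
            ((DD ω (0 : Fin 3) 1 ^ b) (ins 0 f * ins 1 g * ins (2 : Fin 3) p))) := by
  classical
  rw [moyalTerm_eq (σ := Fin 2) ω (show (0 : Fin 2) ≠ 1 by decide) a,
      moyalTerm_eq (σ := Fin 2) ω (show (0 : Fin 2) ≠ 1 by decide) b f g]
  have hins : ∀ w : MvPolynomial (Fin 2 × ι) k,
      ins (0 : Fin 2) (prj (k := k) w) = ren ![0, 0, 1] (ren ![0, 1] w) := by
    intro w
    simp only [ins, prj, ren, rename_rename]
    exact congrArg (fun r => rename r w)
      (funext fun q => by rcases q with ⟨s, i⟩; fin_cases s <;> rfl)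
  have he2 : ins (1 : Fin 2) p = ren (k := k) ![0, 0, 1] (ins (2 : Fin 3) p) :=
    (ren_ins_eq ![0, 0, 1] 2 p).symm
  have hpow01 : ∀ (n : ℕ) (x : MvPolynomial (Fin 2 × ι) k),
      (DD ω (0 : Fin 3) 1 ^ n) (ren (k := k) ![0, 1] x)
        = ren ![0, 1] ((DD ω (0 : Fin 2) 1 ^ n) x) := fun n x =>
    pow_transfer _ _ (ren ![0, 1]).toLinearMap (fun y => DD_embed01 ω y) n x
  have e3 : ren (k := k) ![0, 1] ((DD ω (0 : Fin 2) 1 ^ b) (ins 0 f * ins 1 g))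
      = (DD ω (0 : Fin 3) 1 ^ b) (ins 0 f * ins 1 g) := by
    rw [← hpow01 b]
    congr 1
    rw [map_mul, ren_ins_eq, ren_ins_eq]
    norm_num
  have hpowM : ∀ (n : ℕ) (w : MvPolynomial (Fin 3 × ι) k),
      (DD ω (0 : Fin 2) 1 ^ n) (ren (k := k) ![0, 0, 1] w)
        = ren ![0, 0, 1] ((((DD ω (0 : Fin 3) 2 + DD ω 1 2) : Module.End k _) ^ n) w) :=
    fun n w => pow_transfer _ _ (ren ![0, 0, 1]).toLinearMap (fun y => DD_merge01 ω y) n w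
  rw [map_smul, smul_mul_assoc, map_smul, map_smul, smul_smul, hins, he2, ← map_mul, e3,
    ← DD_pow_mul_ins ω (show (0 : Fin 3) ≠ 2 by decide) (show (1 : Fin 3) ≠ 2 by decide),
    hpowM a, prj_ren_eq, ← mul_inv]

lemma rhs_term (ω : ι → ι → k) (f g p : MvPolynomial ι k) (a b : ℕ) :
    moyalTerm ω a f (moyalTerm ω b g p)
      = ((a.factorial : k) * (b.factorial : k))⁻¹ •
          prj ((((DD ω (0 : Fin 3) 1 + DD ω 0 2) : Module.End k _) ^ a)
            ((DD ω (1 : Fin 3) 2 ^ b) (ins 0 f * ins 1 g * ins (2 : Fin 3) p))) := by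
  classical
  rw [moyalTerm_eq (σ := Fin 2) ω (show (0 : Fin 2) ≠ 1 by decide) a,
      moyalTerm_eq (σ := Fin 2) ω (show (0 : Fin 2) ≠ 1 by decide) b g p]
  have hins : ∀ w : MvPolynomial (Fin 2 × ι) k,
      ins (1 : Fin 2) (prj (k := k) w) = ren ![0, 1, 1] (ren ![1, 2] w) := by
    intro w
    simp only [ins, prj, ren, rename_rename]
    exact congrArg (fun r => rename r w)
      (funext fun q => by rcases q with ⟨s, i⟩; fin_cases s <;> rfl)
  have he2 : ins (0 : Fin 2) f = ren (k := k) ![0, 1, 1] (ins (0 : Fin 3) f) :=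
    (ren_ins_eq ![0, 1, 1] 0 f).symm
  have hpow12 : ∀ (n : ℕ) (x : MvPolynomial (Fin 2 × ι) k),
      (DD ω (1 : Fin 3) 2 ^ n) (ren (k := k) ![1, 2] x)
        = ren ![1, 2] ((DD ω (0 : Fin 2) 1 ^ n) x) := fun n x =>
    pow_transfer _ _ (ren ![1, 2]).toLinearMap (fun y => DD_embed12 ω y) n x
  have e3 : ren (k := k) ![1, 2] ((DD ω (0 : Fin 2) 1 ^ b) (ins 0 g * ins 1 p))
      = (DD ω (1 : Fin 3) 2 ^ b) (ins 1 g * ins (2 : Fin 3) p) := by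
    rw [← hpow12 b]
    congr 1
    rw [map_mul, ren_ins_eq, ren_ins_eq]
    norm_num
  have hpowM : ∀ (n : ℕ) (w : MvPolynomial (Fin 3 × ι) k),
      (DD ω (0 : Fin 2) 1 ^ n) (ren (k := k) ![0, 1, 1] w)
        = ren ![0, 1, 1] ((((DD ω (0 : Fin 3) 1 + DD ω 0 2) : Module.End k _) ^ n) w) :=
    fun n w => pow_transfer _ _ (ren ![0, 1, 1]).toLinearMap (fun y => DD_merge12 ω y) n w
  rw [map_smul, mul_smul_comm, map_smul, map_smul, smul_smul, hins, he2, ← map_mul, e3,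
    ← DD_pow_ins_mul_left ω (show (1 : Fin 3) ≠ 0 by decide) (show (2 : Fin 3) ≠ 0 by decide),
    ← mul_assoc, hpowM a, prj_ren_eq, ← mul_inv]

end MoyalAux

set_option maxHeartbeats 1000000 in
open MoyalAux in
/-- For all polynomials `f, g, p` and every `N`,
`Σ_{a+b=N} m_a(m_b(f,g), p) = Σ_{a+b=N} m_a(f, m_b(g,p))`; equivalently, the Moyal star
product `f ⋆ g = Σₙ hⁿ mₙ(f,g)` is associative on `k[Xᵢ][[h]]`. -/
theorem moyal_star_assoc {k : Type*} [Field k] [CharZero k] {ι : Type*} [Fintype ι]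
    (ω : ι → ι → k) (f g p : MvPolynomial ι k) (N : ℕ) :
    ∑ ab ∈ Finset.HasAntidiagonal.antidiagonal N, moyalTerm ω ab.1 (moyalTerm ω ab.2 f g) p
      = ∑ ab ∈ Finset.HasAntidiagonal.antidiagonal N, moyalTerm ω ab.1 f (moyalTerm ω ab.2 g p) := by
  classical
  have hstep1 : ∑ ab ∈ Finset.HasAntidiagonal.antidiagonal N, moyalTerm ω ab.1 (moyalTerm ω ab.2 f g) p
      = ∑ ab ∈ Finset.HasAntidiagonal.antidiagonal N,
          ((ab.1.factorial * ab.2.factorial : k))⁻¹ •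
            prj.toLinearMap ((((DD ω (0 : Fin 3) 2 + DD ω 1 2) : Module.End k _) ^ ab.1)
              ((DD ω (0 : Fin 3) 1 ^ ab.2) (ins 0 f * ins 1 g * ins (2 : Fin 3) p))) :=
    Finset.sum_congr rfl fun ab _ => by
      simp only [AlgHom.toLinearMap_apply]
      exact lhs_term ω f g p ab.1 ab.2
  have hstep2 : ∑ ab ∈ Finset.HasAntidiagonal.antidiagonal N, moyalTerm ω ab.1 f (moyalTerm ω ab.2 g p)
      = ∑ ab ∈ Finset.HasAntidiagonal.antidiagonal N,
          ((ab.1.factorial * ab.2.factorial : k))⁻¹ •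
            prj.toLinearMap ((((DD ω (0 : Fin 3) 1 + DD ω 0 2) : Module.End k _) ^ ab.1)
              ((DD ω (1 : Fin 3) 2 ^ ab.2) (ins 0 f * ins 1 g * ins (2 : Fin 3) p))) :=
    Finset.sum_congr rfl fun ab _ => by
      simp only [AlgHom.toLinearMap_apply]
      exact rhs_term ω f g p ab.1 ab.2
  have hb1 := binom_combine ((DD_commute ω (0 : Fin 3) 2 0 1).add_left (DD_commute ω 1 2 0 1))
    prj.toLinearMap (ins 0 f * ins 1 g * ins (2 : Fin 3) p) N
  have hb2 := binom_combine ((DD_commute ω (0 : Fin 3) 1 1 2).add_left (DD_commute ω 0 2 1 2))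
    prj.toLinearMap (ins 0 f * ins 1 g * ins (2 : Fin 3) p) N
  have hop : ((DD ω (0 : Fin 3) 2 + DD ω 1 2) + DD ω 0 1)
      = ((DD ω (0 : Fin 3) 1 + DD ω 0 2) + DD ω 1 2) := by abel
  rw [hop] at hb1
  exact (hstep1.trans (hb1.trans hb2.symm)).trans hstep2.symm
end

section
/- For all multivariate polynomials f, g ∈ k[X_i : i ∈ ι] and every natural number n, if m_n(f,g) ≠ 0 then totalDegree(m_n(f,g)) + 2n ≤ totalDegree(f) + totalDegree(g). Consequently, the increasing filtration on k[X_i : i ∈ ι][[h]] in which h and each variable X_i lie in filtration degree 1 is multiplicative with respect to the Moyal star product f ⋆ g = Σ_{n≥0} hⁿ m_n(f,g). -/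
open MvPolynomial

section MoyalAux

variable {k : Type*} [CommRing k] {ι : Type*}

lemma pderiv_deg_mem {i : ι} {f : MvPolynomial ι k} {d : ι →₀ ℕ}
    (hd : d ∈ (pderiv i f).support) :
    (d.sum fun _ n => n) + 1 ≤ f.totalDegree := by
  classical
  have hf : pderiv i f
      = ∑ s ∈ f.support, monomial (s - Finsupp.single i 1) (coeff s f * s i) := by
    conv_lhs => rw [← support_sum_monomial_coeff f]
    rw [map_sum]
    simp [pderiv_monomial]
  rw [hf] at hd
  obtain ⟨s, hs, hds⟩ := Finset.mem_biUnion.mp (MvPolynomial.support_sum hd)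
  rw [mem_support_iff, coeff_monomial] at hds
  split_ifs at hds with hde
  · subst hde
    have hsi : s i ≠ 0 := fun h0 => hds (by simp [h0])
    have hle : Finsupp.single i 1 ≤ s := by
      rw [Finsupp.single_le_iff]; omega
    have hsum : (s - Finsupp.single i 1).sum (fun _ n => n) + 1 = s.sum fun _ n => n := by
      have := tsub_add_cancel_of_le hle
      calc (s - Finsupp.single i 1).sum (fun _ n => n) + 1
          = (s - Finsupp.single i 1).sum (fun _ n => n)
            + (Finsupp.single i 1).sum (fun _ n => n) := by
            rw [Finsupp.sum_single_index]; rfl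
        _ = ((s - Finsupp.single i 1) + Finsupp.single i 1).sum fun _ n => n := by
            rw [Finsupp.sum_add_index' (fun _ => rfl) (fun _ _ _ => rfl)]
        _ = s.sum fun _ n => n := by rw [this]
    rw [hsum]
    exact le_totalDegree hs
  · exact absurd rfl hds

lemma pderiv_step {i : ι} {f : MvPolynomial ι k} (h : pderiv i f ≠ 0) :
    (pderiv i f).totalDegree + 1 ≤ f.totalDegree := by
  obtain ⟨d0, hd0⟩ := (support_nonempty.mpr h)
  have hpos : 1 ≤ f.totalDegree := le_trans (by omega) (pderiv_deg_mem hd0)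
  have : (pderiv i f).totalDegree < f.totalDegree := by
    rw [totalDegree, Finset.sup_lt_iff (show (⊥:ℕ) < f.totalDegree from hpos)]
    intro d hd
    have := pderiv_deg_mem (f := f) hd
    omega
  omega

lemma foldl_zero (l : List ι) :
    l.foldl (fun g i => (pderiv i g : MvPolynomial ι k)) 0 = 0 := by
  induction l with
  | nil => rfl
  | cons a l ih => simpa using ih

lemma foldl_deg (l : List ι) (f : MvPolynomial ι k)
    (h : l.foldl (fun g i => pderiv i g) f ≠ 0) :
    (l.foldl (fun g i => pderiv i g) f).totalDegree + l.length ≤ f.totalDegree := by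
  induction l generalizing f with
  | nil => simp
  | cons a l ih =>
    simp only [List.foldl_cons, List.length_cons] at *
    have hne : pderiv a f ≠ 0 := by
      rintro h0; rw [h0, foldl_zero] at h; exact h rfl
    have h1 := pderiv_step hne
    have h2 := ih (pderiv a f) h
    omega

lemma iterPDeriv_deg {n : ℕ} (v : Fin n → ι) (f : MvPolynomial ι k)
    (h : iterPDeriv v f ≠ 0) :
    (iterPDeriv v f).totalDegree + n ≤ f.totalDegree := by
  have := foldl_deg (List.ofFn v) f h
  simpa [iterPDeriv] using this

theorem moyalTerm_totalDegree_aux {k : Type*} [Field k] [CharZero k] {ι : Type*} [Fintype ι]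
    (ω : ι → ι → k) (f g : MvPolynomial ι k) (n : ℕ)
    (h : ((n.factorial : k)⁻¹ •
    ∑ p : Fin n → ι × ι,
      (∏ t, ω (p t).1 (p t).2) •
        (iterPDeriv (fun t => (p t).1) f * iterPDeriv (fun t => (p t).2) g)) ≠ 0) :
    ((n.factorial : k)⁻¹ •
    ∑ p : Fin n → ι × ι,
      (∏ t, ω (p t).1 (p t).2) •
        (iterPDeriv (fun t => (p t).1) f * iterPDeriv (fun t => (p t).2) g)).totalDegree
      + 2 * n ≤ f.totalDegree + g.totalDegree := by
  classical
  set T : (Fin n → ι × ι) → MvPolynomial ι k := fun p =>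
    (∏ t, ω (p t).1 (p t).2) •
      (iterPDeriv (fun t => (p t).1) f * iterPDeriv (fun t => (p t).2) g) with hT
  have hS : (∑ p : Fin n → ι × ι, T p) ≠ 0 := by
    intro h0; rw [h0, smul_zero] at h; exact h rfl
  obtain ⟨p0, _, hp0⟩ : ∃ p0 ∈ (Finset.univ : Finset (Fin n → ι × ι)), T p0 ≠ 0 := by
    by_contra hc
    push_neg at hc
    exact hS (Finset.sum_eq_zero hc)
  have hA0 : iterPDeriv (fun t => (p0 t).1) f ≠ 0 := by
    intro h0; apply hp0; rw [hT]; simp [h0]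
  have hB0 : iterPDeriv (fun t => (p0 t).2) g ≠ 0 := by
    intro h0; apply hp0; rw [hT]; simp [h0]
  have h2n : 2 * n ≤ f.totalDegree + g.totalDegree := by
    have := iterPDeriv_deg _ _ hA0
    have := iterPDeriv_deg _ _ hB0
    omega
  have hbound : ∀ p : Fin n → ι × ι,
      (T p).totalDegree ≤ f.totalDegree + g.totalDegree - 2 * n := by
    intro p
    by_cases hA : iterPDeriv (fun t => (p t).1) f = 0
    · simp [hT, hA]
    by_cases hB : iterPDeriv (fun t => (p t).2) g = 0
    · simp [hT, hB]
    have h1 := iterPDeriv_deg _ _ hA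
    have h2 := iterPDeriv_deg _ _ hB
    calc (T p).totalDegree
        ≤ (iterPDeriv (fun t => (p t).1) f * iterPDeriv (fun t => (p t).2) g).totalDegree :=
          totalDegree_smul_le _ _
      _ ≤ (iterPDeriv (fun t => (p t).1) f).totalDegree
          + (iterPDeriv (fun t => (p t).2) g).totalDegree := totalDegree_mul _ _
      _ ≤ f.totalDegree + g.totalDegree - 2 * n := by omega
  have hdeg : ((n.factorial : k)⁻¹ • ∑ p : Fin n → ι × ι, T p).totalDegree
      ≤ f.totalDegree + g.totalDegree - 2 * n := by
    refine le_trans (totalDegree_smul_le _ _) ?_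
    refine le_trans (totalDegree_finset_sum _ _) ?_
    exact Finset.sup_le fun p _ => hbound p
  have hed : ((n.factorial : k)⁻¹ • ∑ p : Fin n → ι × ι, T p).totalDegree
      = ((n.factorial : k)⁻¹ • Finset.univ.sum T).totalDegree := rfl
  omega

end MoyalAux

/-- If `m_n(f,g) ≠ 0` then `totalDegree (m_n(f,g)) + 2n ≤ totalDegree f + totalDegree g`;
consequently the increasing filtration of `k[Xᵢ][[h]]` in which `h` and the variables `Xᵢ`
have degree `1` is multiplicative for the Moyal star product `f ⋆ g = Σₙ hⁿ mₙ(f,g)`. -/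


theorem moyalTerm_totalDegree {k : Type*} [Field k] [CharZero k] {ι : Type*} [Fintype ι]
    (ω : ι → ι → k) (f g : MvPolynomial ι k) (n : ℕ) (h : moyalTerm ω n f g ≠ 0) :
    (moyalTerm ω n f g).totalDegree + 2 * n ≤ f.totalDegree + g.totalDegree := by
  unfold moyalTerm at h ⊢
  exact moyalTerm_totalDegree_aux ω f g n h
end

section
/- The operator D satisfies D ∘ D = 0, and the cohomology of the complex (Ω^•, D) of polynomial differential forms is concentrated in top degree n, where it is a one-dimensional k-vector space spanned by the class of dx₁∧dx₂∧⋯∧dx_n. -/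
open MvPolynomial

/-- The space `Ω^• = k[x₁,…,xₙ] ⊗ Λ(dx₁,…,dxₙ)` of polynomial differential forms on
affine `n`-space; a form is recorded by its coefficient family: to a subset
`S ⊆ {1,…,n}` it assigns the polynomial coefficient of `dx_S` (the wedge of the `dxᵢ`,
`i ∈ S`, in increasing order). A `p`-form is supported on subsets of cardinality `p`. -/
abbrev PolyForms (k : Type*) [CommRing k] (n : ℕ) := Finset (Fin n) → MvPolynomial (Fin n) k

/-- A form is homogeneous of degree `p` if all its nonzero components sit on subsets of
cardinality `p`, i.e. it lies in `Ω^p`. -/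
def FormDegree {k : Type*} [CommRing k] {n : ℕ} (p : ℕ) (a : PolyForms k n) : Prop :=
  ∀ S : Finset (Fin n), a S ≠ 0 → S.card = p

/-- The twisted de Rham differential `D(α) = dα − 2·(Σᵢ xᵢ dxᵢ) ∧ α`, written in terms
of coefficient families: `dxᵢ ∧ dx_{T∖{i}} = (−1)^{#{j ∈ T∖{i} : j < i}} dx_T`. -/
noncomputable def twistedDeRham {k : Type*} [CommRing k] {n : ℕ}
    (a : PolyForms k n) : PolyForms k n :=
  fun T => ∑ i ∈ T,
    ((-1 : k) ^ ((T.erase i).filter (fun j => j < i)).card) •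
      (MvPolynomial.pderiv i (a (T.erase i))
        - 2 * (MvPolynomial.X i * a (T.erase i)))

/-- The top form `dx₁∧dx₂∧⋯∧dxₙ`. -/
noncomputable def topForm (k : Type*) [CommRing k] (n : ℕ) : PolyForms k n :=
  fun S => if S = Finset.univ then 1 else 0

set_option linter.unusedSectionVars false

namespace TDR
variable {k : Type*} [Field k] [CharZero k] {n : ℕ}

noncomputable def P (i : Fin n) (f : MvPolynomial (Fin n) k) : MvPolynomial (Fin n) k :=
  pderiv i f - 2 * (X i * f)

def cnt (i : Fin n) (T : Finset (Fin n)) : ℕ := ((T.erase i).filter (fun j => j < i)).card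

noncomputable def sg (k : Type*) [Field k] (i : Fin n) (T : Finset (Fin n)) : k :=
  (-1 : k) ^ cnt i T

lemma tdr_eq (a : PolyForms k n) (T : Finset (Fin n)) :
    twistedDeRham a T = ∑ i ∈ T, sg k i T • P i (a (T.erase i)) := rfl

lemma P_smul (i : Fin n) (c : k) (f : MvPolynomial (Fin n) k) : P i (c • f) = c • P i f := by
  simp [P, smul_sub, Derivation.map_smul, mul_smul_comm]

lemma P_sum {α : Type*} (i : Fin n) (s : Finset α) (g : α → MvPolynomial (Fin n) k) :
    P i (∑ j ∈ s, g j) = ∑ j ∈ s, P i (g j) := by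
  simp [P, map_sum, Finset.mul_sum, Finset.sum_sub_distrib]

lemma P_add (i : Fin n) (f g : MvPolynomial (Fin n) k) : P i (f + g) = P i f + P i g := by
  simp [P, mul_add]; ring

lemma P_zero (i : Fin n) : P i (0 : MvPolynomial (Fin n) k) = 0 := by simp [P]

lemma pderiv_comm (i j : Fin n) (f : MvPolynomial (Fin n) k) :
    pderiv i (pderiv j f) = pderiv j (pderiv i f) := by
  rcases eq_or_ne i j with rfl | hij
  · rfl
  · rw [← support_sum_monomial_coeff f, map_sum, map_sum, map_sum, map_sum]
    refine Finset.sum_congr rfl fun d _ => ?_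
    simp only [pderiv_monomial, Finsupp.tsub_apply, Finsupp.single_eq_of_ne hij,
      Finsupp.single_eq_of_ne (Ne.symm hij), Nat.sub_zero, tsub_tsub]
    rw [add_comm (Finsupp.single j 1)]
    ring_nf

lemma pderiv_two (i : Fin n) : pderiv i (2 : MvPolynomial (Fin n) k) = 0 := by
  rw [← map_ofNat (C : k →+* MvPolynomial (Fin n) k) 2]; exact pderiv_C

lemma pderiv_P_comm (i j : Fin n) (h : i ≠ j) (f : MvPolynomial (Fin n) k) :
    P i (pderiv j f) = pderiv j (P i f) := by
  simp only [P, map_sub, pderiv_mul, pderiv_X_of_ne h.symm, pderiv_X_of_ne h, zero_mul, zero_add,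
    pderiv_comm i j f, mul_sub, pderiv_two]

lemma P_comm (i j : Fin n) (h : i ≠ j) (f : MvPolynomial (Fin n) k) :
    P i (P j f) = P j (P i f) := by
  simp only [P, map_sub, pderiv_mul, pderiv_X_of_ne h.symm, pderiv_X_of_ne h,
    pderiv_comm i j f, zero_mul, zero_add, mul_sub, pderiv_two]
  ring_nf


lemma cnt_erase (i j : Fin n) (T : Finset (Fin n)) (hj : j ∈ T) (hij : j ≠ i) :
    cnt i T = cnt i (T.erase j) + (if j < i then 1 else 0) := by
  classical
  have h1 : (T.erase j).erase i = (T.erase i).erase j := Finset.erase_right_comm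
  have h2 : cnt i (T.erase j) = (((T.erase i).filter (fun x => x < i)).erase j).card := by
    rw [cnt, h1, Finset.filter_erase]
  rw [h2, cnt]
  by_cases h : j < i
  · have hmem : j ∈ (T.erase i).filter (fun x => x < i) := by
      simp [Finset.mem_filter, Finset.mem_erase, hj, hij, h]
    rw [Finset.card_erase_of_mem hmem, if_pos h]
    have : 1 ≤ ((T.erase i).filter (fun x => x < i)).card := Finset.card_pos.mpr ⟨j, hmem⟩
    omega
  · have hnm : j ∉ ((T.erase i).filter (fun x => x < i)) := by
      simp [Finset.mem_filter, h]
    rw [Finset.erase_eq_of_notMem hnm, if_neg h, add_zero]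

lemma sq_one (c : ℕ) : ((-1 : k) ^ c) * ((-1 : k) ^ c) = 1 := by
  rw [← pow_add]
  exact Even.neg_one_pow ⟨c, rfl⟩

lemma sg_antisym (i j : Fin n) (T : Finset (Fin n)) (hi : i ∈ T) (hj : j ∈ T) (hij : i ≠ j) :
    (sg k i T) * (sg k j (T.erase i)) = -((sg k j T) * (sg k i (T.erase j))) := by
  have e1 : cnt i T = cnt i (T.erase j) + (if j < i then 1 else 0) := cnt_erase i j T hj hij.symm
  have e2 : cnt j T = cnt j (T.erase i) + (if i < j then 1 else 0) := cnt_erase j i T hi hij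
  rcases hij.lt_or_gt with h | h
  · rw [sg, sg, sg, sg, e1, e2, if_pos h, if_neg (asymm h)]
    ring
  · rw [sg, sg, sg, sg, e1, e2, if_pos h, if_neg (asymm h)]
    ring

lemma sum_antisym {T : Finset (Fin n)} (F : Fin n → Fin n → MvPolynomial (Fin n) k)
    (hF : ∀ i ∈ T, ∀ j ∈ T, i ≠ j → F i j = -F j i) :
    ∑ i ∈ T, ∑ j ∈ T.erase i, F i j = 0 := by
  have hcomm : (∑ i ∈ T, ∑ j ∈ T.erase i, F i j) = ∑ j ∈ T, ∑ i ∈ T.erase j, F i j :=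
    Finset.sum_comm' (fun x y => by
      simp only [Finset.mem_erase]
      constructor
      · rintro ⟨hx, hy, hxy⟩; exact ⟨⟨(Ne.symm hy), hx⟩, hxy⟩
      · rintro ⟨⟨hxy, hx⟩, hy⟩; exact ⟨hx, Ne.symm hxy, hy⟩)
  have hneg : (∑ j ∈ T, ∑ i ∈ T.erase j, F i j) = -∑ i ∈ T, ∑ j ∈ T.erase i, F i j := by
    rw [← Finset.sum_neg_distrib]
    refine Finset.sum_congr rfl fun j hj => ?_
    rw [← Finset.sum_neg_distrib]
    refine Finset.sum_congr rfl fun i hi => ?_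
    rw [hF i (Finset.mem_of_mem_erase hi) j hj (Finset.ne_of_mem_erase hi)]
  have : (∑ i ∈ T, ∑ j ∈ T.erase i, F i j) = -(∑ i ∈ T, ∑ j ∈ T.erase i, F i j) :=
    hcomm.trans hneg
  exact CharZero.eq_neg_self_iff.mp this

theorem DD (a : PolyForms k n) : twistedDeRham (twistedDeRham a) = 0 := by
  funext T
  rw [tdr_eq]
  have : ∀ i ∈ T, sg k i T • P i (twistedDeRham a (T.erase i)) =
      ∑ j ∈ T.erase i, (sg k i T * sg k j (T.erase i)) • P i (P j (a ((T.erase i).erase j))) := by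
    intro i _
    rw [tdr_eq, P_sum, Finset.smul_sum]
    refine Finset.sum_congr rfl fun j _ => ?_
    rw [P_smul, smul_smul]
  rw [Finset.sum_congr rfl this]
  refine sum_antisym _ fun i hi j hj hij => ?_
  rw [sg_antisym i j T hi hj hij, P_comm i j hij, Finset.erase_right_comm, neg_smul]


noncomputable def hOp (a : PolyForms k n) : PolyForms k n :=
  fun S => ∑ i ∈ Sᶜ, sg k i (insert i S) • pderiv i (a (insert i S))

noncomputable def L (c : ℕ) (f : MvPolynomial (Fin n) k) : MvPolynomial (Fin n) k :=
  (∑ i : Fin n, (pderiv i (pderiv i f) - 2 * (X i * pderiv i f))) - (2 * (c : k)) • f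

lemma hOp_eq (a : PolyForms k n) (S : Finset (Fin n)) :
    hOp a S = ∑ i ∈ Sᶜ, sg k i (insert i S) • pderiv i (a (insert i S)) := rfl

lemma sg_mul_self (i : Fin n) (T : Finset (Fin n)) : (sg k i T) * (sg k i T) = 1 := sq_one _

lemma cnt_insert_self (j : Fin n) (S : Finset (Fin n)) (h : j ∉ S) :
    cnt j (insert j S) = (S.filter (fun x => x < j)).card := by
  rw [cnt, Finset.erase_insert h]

lemma cnt_insert (i j : Fin n) (T : Finset (Fin n)) (hj : j ∉ T) (hij : i ≠ j) :
    cnt i (insert j T) = cnt i T + (if j < i then 1 else 0) := by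
  rw [cnt, Finset.erase_insert_of_ne hij.symm, Finset.filter_insert]
  by_cases h : j < i
  · have : j ∉ (T.erase i).filter (fun x => x < i) := by
      simp [Finset.mem_filter, Finset.mem_erase]
      intro h1 h2; exact absurd h2 hj
    rw [if_pos h, if_pos h, Finset.card_insert_of_notMem this, cnt]
  · rw [if_neg h, if_neg h, add_zero, cnt]

lemma filter_erase_card (i j : Fin n) (T : Finset (Fin n)) (hi : i ∈ T) (hij : i ≠ j) :
    (T.filter (fun x => x < j)).card
      = ((T.erase i).filter (fun x => x < j)).card + (if i < j then 1 else 0) := by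
  rw [Finset.filter_erase]
  by_cases h : i < j
  · have hmem : i ∈ T.filter (fun x => x < j) := by simp [hi, h]
    rw [Finset.card_erase_of_mem hmem, if_pos h]
    have : 1 ≤ (T.filter (fun x => x < j)).card := Finset.card_pos.mpr ⟨i, hmem⟩
    omega
  · have hnm : i ∉ T.filter (fun x => x < j) := by simp [h]
    rw [Finset.erase_eq_of_notMem hnm, if_neg h, add_zero]

lemma sg_antisym2 (i j : Fin n) (T : Finset (Fin n)) (hi : i ∈ T) (hj : j ∉ T) :
    (sg k j (insert j T)) * (sg k i (insert j T))
      = -((sg k i T) * (sg k j (insert j (T.erase i)))) := by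
  have hij : i ≠ j := fun h => hj (h ▸ hi)
  have hjTe : j ∉ T.erase i := fun h => hj (Finset.mem_of_mem_erase h)
  rw [sg, sg, sg, sg, cnt_insert_self j T hj, cnt_insert_self j (T.erase i) hjTe,
    cnt_insert i j T hj hij, filter_erase_card i j T hi hij]
  rcases hij.lt_or_gt with h | h
  · rw [if_pos h, if_neg (asymm h)]; ring
  · rw [if_neg (asymm h), if_pos h]; ring

lemma P_pderiv_self (i : Fin n) (f : MvPolynomial (Fin n) k) :
    P i (pderiv i f) = pderiv i (pderiv i f) - 2 * (X i * pderiv i f) := rfl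

lemma pderiv_P_self (j : Fin n) (f : MvPolynomial (Fin n) k) :
    pderiv j (P j f) = (pderiv j (pderiv j f) - 2 * (X j * pderiv j f)) - 2 * f := by
  simp only [P, map_sub, pderiv_mul, pderiv_X_self, pderiv_two, one_mul, zero_mul, zero_add,
    mul_add]
  ring

lemma smul_bridge (c : ℕ) (f : MvPolynomial (Fin n) k) :
    (2 * (c : k)) • f = c • (2 * f) := by
  rw [mul_smul, Nat.cast_smul_eq_nsmul, smul_eq_C_mul, map_ofNat, ← mul_smul_comm]

theorem homotopy (a : PolyForms k n) (T : Finset (Fin n)) :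
    twistedDeRham (hOp a) T + hOp (twistedDeRham a) T = L (Tᶜ.card) (a T) := by
  classical
  have h1 : twistedDeRham (hOp a) T
      = ∑ i ∈ T, P i (pderiv i (a T))
        + ∑ i ∈ T, ∑ j ∈ Tᶜ, (sg k i T * sg k j (insert j (T.erase i))) •
            P i (pderiv j (a (insert j (T.erase i)))) := by
    rw [tdr_eq, ← Finset.sum_add_distrib]
    refine Finset.sum_congr rfl fun i hi => ?_
    have hiTc : i ∉ (Tᶜ : Finset (Fin n)) := by simp [hi]
    rw [hOp_eq, Finset.compl_erase, Finset.sum_insert hiTc, Finset.insert_erase hi,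
      P_add, P_smul, smul_add, smul_smul, sg_mul_self, one_smul, P_sum, Finset.smul_sum]
    congr 1
    refine Finset.sum_congr rfl fun j hj => ?_
    rw [P_smul, smul_smul]
  have h2 : hOp (twistedDeRham a) T
      = ∑ j ∈ Tᶜ, pderiv j (P j (a T))
        + ∑ j ∈ Tᶜ, ∑ i ∈ T, (sg k j (insert j T) * sg k i (insert j T)) •
            pderiv j (P i (a ((insert j T).erase i))) := by
    rw [hOp_eq, ← Finset.sum_add_distrib]
    refine Finset.sum_congr rfl fun j hj => ?_
    have hjT : j ∉ T := by simpa using hj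
    rw [tdr_eq, Finset.sum_insert hjT, Finset.erase_insert hjT, map_add,
      Derivation.map_smul, smul_add, smul_smul, sg_mul_self, one_smul, map_sum,
      Finset.smul_sum]
    congr 1
    refine Finset.sum_congr rfl fun i hi => ?_
    rw [Derivation.map_smul, smul_smul]
  rw [h1, h2, add_add_add_comm]
  have hcross : (∑ i ∈ T, ∑ j ∈ Tᶜ, (sg k i T * sg k j (insert j (T.erase i))) •
            P i (pderiv j (a (insert j (T.erase i)))))
      + (∑ j ∈ Tᶜ, ∑ i ∈ T, (sg k j (insert j T) * sg k i (insert j T)) •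
            pderiv j (P i (a ((insert j T).erase i)))) = 0 := by
    rw [Finset.sum_comm (s := Tᶜ) (t := T), ← Finset.sum_add_distrib]
    refine Finset.sum_eq_zero fun i hi => ?_
    rw [← Finset.sum_add_distrib]
    refine Finset.sum_eq_zero fun j hj => ?_
    have hjT : j ∉ T := by simpa using hj
    have hij : i ≠ j := fun h => hjT (h ▸ hi)
    have hset : (insert j T).erase i = insert j (T.erase i) :=
      Finset.erase_insert_of_ne hij.symm
    rw [hset, ← pderiv_P_comm i j hij, sg_antisym2 i j T hi hjT, neg_smul, add_neg_cancel]
  rw [hcross, add_zero]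
  have hsplit : (∑ i ∈ T, P i (pderiv i (a T))) + ∑ j ∈ Tᶜ, pderiv j (P j (a T))
      = (∑ i : Fin n, (pderiv i (pderiv i (a T)) - 2 * (X i * pderiv i (a T))))
        - (Tᶜ.card) • (2 * a T) := by
    have e1 : ∀ i : Fin n, P i (pderiv i (a T))
        = pderiv i (pderiv i (a T)) - 2 * (X i * pderiv i (a T)) := fun i => rfl
    have e2 : ∀ j : Fin n, pderiv j (P j (a T))
        = (pderiv j (pderiv j (a T)) - 2 * (X j * pderiv j (a T))) - 2 * a T :=
      fun j => pderiv_P_self j (a T)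
    calc (∑ i ∈ T, P i (pderiv i (a T))) + ∑ j ∈ Tᶜ, pderiv j (P j (a T))
        = (∑ i ∈ T, (pderiv i (pderiv i (a T)) - 2 * (X i * pderiv i (a T))))
          + ((∑ j ∈ Tᶜ, (pderiv j (pderiv j (a T)) - 2 * (X j * pderiv j (a T))))
            - ∑ _j ∈ Tᶜ, 2 * a T) := by
          rw [← Finset.sum_sub_distrib]
          exact congrArg₂ (· + ·) (Finset.sum_congr rfl fun i _ => e1 i)
            (Finset.sum_congr rfl fun j _ => e2 j)
      _ = _ := by
          rw [← add_sub_assoc, Finset.sum_add_sum_compl, Finset.sum_const]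
  rw [hsplit, L, smul_bridge]


/-! ### polynomial degree toolbox -/

lemma fsum_eq_degree (d : Fin n →₀ ℕ) : (d.sum fun _ e => e) = d.degree := by
  rfl

lemma degree_eq_sum_univ (d : Fin n →₀ ℕ) : d.degree = ∑ i : Fin n, d i :=
  Finset.sum_subset (Finset.subset_univ _) fun _ _ h => Finsupp.notMem_support_iff.mp h

noncomputable def Efn (f : MvPolynomial (Fin n) k) : MvPolynomial (Fin n) k :=
  ∑ i : Fin n, X i * pderiv i f

noncomputable def Dl (f : MvPolynomial (Fin n) k) : MvPolynomial (Fin n) k :=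
  ∑ i : Fin n, pderiv i (pderiv i f)

lemma L_eq (c : ℕ) (f : MvPolynomial (Fin n) k) :
    L c f = Dl f - 2 * Efn f - (2 * (c : k)) • f := by
  rw [L, Dl, Efn, Finset.mul_sum, ← Finset.sum_sub_distrib]

lemma two_mul_eq_smul (g : MvPolynomial (Fin n) k) : 2 * g = (2 : k) • g := by
  rw [smul_eq_C_mul, map_ofNat]

lemma Efn_sum {α : Type*} (s : Finset α) (g : α → MvPolynomial (Fin n) k) :
    Efn (∑ x ∈ s, g x) = ∑ x ∈ s, Efn (g x) := by
  simp only [Efn, map_sum, Finset.mul_sum]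
  exact Finset.sum_comm

lemma Efn_monomial (d : Fin n →₀ ℕ) (a : k) :
    Efn (monomial d a) = d.degree • monomial d a := by
  have key : ∀ i : Fin n, X i * pderiv i (monomial d a) = (d i) • monomial d a := by
    intro i
    rw [pderiv_monomial]
    rcases Nat.eq_zero_or_pos (d i) with h | h
    · simp [h]
    · rw [X, monomial_mul, one_mul]
      have h1 : Finsupp.single i 1 + (d - Finsupp.single i 1) = d := by
        ext j
        rcases eq_or_ne j i with rfl | hji
        · simp only [Finsupp.add_apply, Finsupp.tsub_apply, Finsupp.single_eq_same]
          omega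
        · simp [Finsupp.single_eq_of_ne' (Ne.symm hji)]
      rw [h1, ← map_nsmul (monomial d), nsmul_eq_mul, mul_comm]
  rw [Efn, Finset.sum_congr rfl fun i _ => key i, ← Finset.sum_smul, ← degree_eq_sum_univ]

lemma Efn_apply (f : MvPolynomial (Fin n) k) :
    Efn f = ∑ d ∈ f.support, d.degree • monomial d (coeff d f) := by
  conv_lhs => rw [← support_sum_monomial_coeff f]
  rw [Efn_sum]
  exact Finset.sum_congr rfl fun d _ => Efn_monomial d _

lemma hcm_monomial (m : ℕ) (d : Fin n →₀ ℕ) (a : k) :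
    homogeneousComponent m (monomial d a) = if d.degree = m then monomial d a else 0 := by
  ext e
  rw [coeff_homogeneousComponent]
  by_cases hde : d = e
  · subst hde
    split_ifs <;> simp_all [coeff_monomial]
  · split_ifs <;> simp_all [coeff_monomial, hde]

lemma hc_Efn (m : ℕ) (f : MvPolynomial (Fin n) k) :
    homogeneousComponent m (Efn f) = m • homogeneousComponent m f := by
  conv_rhs => rw [← support_sum_monomial_coeff f]
  rw [Efn_apply, map_sum, map_sum, Finset.smul_sum]
  refine Finset.sum_congr rfl fun d _ => ?_
  rw [map_nsmul, hcm_monomial]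
  split_ifs with h
  · rw [h]
  · simp

lemma Efn_hc (m : ℕ) (f : MvPolynomial (Fin n) k) :
    Efn (homogeneousComponent m f) = m • homogeneousComponent m f := by
  conv_rhs => rw [← support_sum_monomial_coeff (homogeneousComponent m f)]
  rw [Efn_apply, Finset.smul_sum]
  refine Finset.sum_congr rfl fun d hd => ?_
  have : d.degree = m := by
    have := mem_support_iff.mp hd
    rw [coeff_homogeneousComponent] at this
    by_contra hne
    exact this (if_neg hne)
  rw [this]

lemma degree_sub_single (d : Fin n →₀ ℕ) (i : Fin n) (h : d i ≠ 0) :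
    (d - Finsupp.single i 1).degree + 1 = d.degree := by
  rw [degree_eq_sum_univ, degree_eq_sum_univ,
    ← Finset.sum_erase_add _ _ (Finset.mem_univ i), ← Finset.sum_erase_add _ _ (Finset.mem_univ i)]
  have he : ∀ j ∈ Finset.univ.erase i, (d - Finsupp.single i 1 : Fin n →₀ ℕ) j = d j := by
    intro j hj
    rw [Finsupp.tsub_apply, Finsupp.single_eq_of_ne' (Ne.symm (Finset.mem_erase.mp hj).1)]
    omega
  rw [Finset.sum_congr rfl he, Finsupp.tsub_apply, Finsupp.single_eq_same]
  have hbr : ∑ x ∈ Finset.univ.erase i, d x = (Finset.univ.erase i).sum ⇑d := rfl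
  omega

lemma totalDegree_pderiv_le (i : Fin n) (f : MvPolynomial (Fin n) k) :
    (pderiv i f).totalDegree ≤ f.totalDegree - 1 := by
  conv_lhs => rw [← support_sum_monomial_coeff f]
  rw [map_sum]
  refine (totalDegree_finset_sum _ _).trans (Finset.sup_le fun d hd => ?_)
  rw [pderiv_monomial]
  by_cases h : (coeff d f * ((d i : ℕ) : k)) = 0
  · rw [h, map_zero, totalDegree_zero]
    exact Nat.zero_le _
  · have hdi : d i ≠ 0 := by
      intro h0
      rw [h0] at h
      simp at h
    have h1 := degree_sub_single d i hdi
    have h2 : d.degree ≤ f.totalDegree := by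
      rw [← fsum_eq_degree]
      exact le_totalDegree hd
    refine (totalDegree_monomial_le _ _).trans ?_
    have h3 : ((d - Finsupp.single i 1).sum fun _ => id) = (d - Finsupp.single i 1).degree :=
      fsum_eq_degree _
    rw [h3]
    omega

lemma hc_top_ne (f : MvPolynomial (Fin n) k) (hf : f ≠ 0) :
    homogeneousComponent f.totalDegree f ≠ 0 := by
  obtain ⟨d, hd, hdeg⟩ := Finset.exists_mem_eq_sup f.support
    (support_nonempty.mpr hf) (fun s => s.sum fun _ e => e)
  intro h0
  apply mem_support_iff.mp hd
  have hdt : d.degree = f.totalDegree := by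
    rw [← fsum_eq_degree]
    exact hdeg.symm
  have hco := congrArg (coeff d) h0
  rw [coeff_homogeneousComponent, if_pos hdt] at hco
  simpa using hco


lemma L_zero (c : ℕ) : L c (0 : MvPolynomial (Fin n) k) = 0 := by simp [L]

lemma L_smul (c : ℕ) (s : k) (f : MvPolynomial (Fin n) k) : L c (s • f) = s • L c f := by
  simp only [L, Derivation.map_smul, mul_smul_comm, smul_sub, Finset.smul_sum, smul_comm s]

lemma Dl_add (f g : MvPolynomial (Fin n) k) : Dl (f + g) = Dl f + Dl g := by
  simp [Dl, map_add, Finset.sum_add_distrib]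

lemma Efn_add (f g : MvPolynomial (Fin n) k) : Efn (f + g) = Efn f + Efn g := by
  simp [Efn, map_add, mul_add, Finset.sum_add_distrib]

lemma L_add (c : ℕ) (f g : MvPolynomial (Fin n) k) : L c (f + g) = L c f + L c g := by
  rw [L_eq, L_eq, L_eq, Dl_add, Efn_add, mul_add, smul_add]
  abel

lemma L_C (c : ℕ) (e : k) :
    L c (C e : MvPolynomial (Fin n) k) = -((2 * (c : k)) • (C e : MvPolynomial (Fin n) k)) := by
  simp [L, pderiv_C]

lemma totalDegree_Dl_le (f : MvPolynomial (Fin n) k) : (Dl f).totalDegree ≤ f.totalDegree - 2 := by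
  rw [Dl]
  refine (totalDegree_finset_sum _ _).trans (Finset.sup_le fun i _ => ?_)
  have h1 := totalDegree_pderiv_le i (pderiv i f)
  have h2 := totalDegree_pderiv_le i f
  omega

lemma L_ker {c : ℕ} {f : MvPolynomial (Fin n) k} (h : L c f = 0) :
    f = C (coeff 0 f) ∧ (c ≠ 0 → f = 0) := by
  have hdeg : f.totalDegree = 0 := by
    by_contra hM
    have hf0 : f ≠ 0 := fun h0 => hM (by simp [h0])
    have h1 : homogeneousComponent f.totalDegree (L c f) = 0 := by rw [h, map_zero]
    have hDl : homogeneousComponent f.totalDegree (Dl f) = 0 :=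
      homogeneousComponent_eq_zero _ (Dl f)
        (by have h4 := totalDegree_Dl_le f; have h5 : f.totalDegree ≠ 0 := hM; omega)
    rw [L_eq, map_sub, map_sub, two_mul_eq_smul, map_smul, map_smul, hc_Efn, hDl,
      zero_sub] at h1
    have h2 : ((2 : k) * ((f.totalDegree : k) + (c : k))) • homogeneousComponent f.totalDegree f
        = 0 := by
      rw [← neg_eq_zero, ← h1]
      push_cast
      rw [← Nat.cast_smul_eq_nsmul k f.totalDegree]
      module
    rw [smul_eq_zero] at h2
    rcases h2 with h2 | h2
    · have h3 : ((2 * (f.totalDegree + c) : ℕ) : k) ≠ 0 := Nat.cast_ne_zero.mpr (by omega)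
      push_cast at h3
      exact h3 h2
    · exact hc_top_ne f hf0 h2
  have hC : f = C (coeff 0 f) := by
    have hs := sum_homogeneousComponent f
    rw [hdeg] at hs
    simpa [homogeneousComponent_zero] using hs.symm
  refine ⟨hC, fun hc0 => ?_⟩
  rw [hC, L_C, neg_eq_zero, smul_eq_zero] at h
  rcases h with h | h
  · exact absurd h (by
      have : ((2 * c : ℕ) : k) ≠ 0 := Nat.cast_ne_zero.mpr (by omega)
      push_cast at this
      simpa using this)
  · rw [hC, h]


lemma eq_C_of_deg_le_zero {f : MvPolynomial (Fin n) k} (h : f.totalDegree = 0) :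
    f = C (coeff 0 f) := by
  have hs := sum_homogeneousComponent f
  rw [h] at hs
  simpa [homogeneousComponent_zero] using hs.symm

lemma L_solve (c : ℕ) : ∀ m : ℕ, ∀ f : MvPolynomial (Fin n) k, f.totalDegree ≤ m →
    ∃ g r, f = L c g + C r ∧ (c ≠ 0 → r = 0) := by
  intro m
  induction m with
  | zero =>
    intro f hf
    have hC : f = C (coeff 0 f) := eq_C_of_deg_le_zero (Nat.le_zero.mp hf)
    by_cases hc0 : c = 0
    · exact ⟨0, coeff 0 f, by rw [L_zero, zero_add, ← hC], fun h => absurd hc0 h⟩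
    · have hs : (2 * (c : k)) ≠ 0 := by
        have h3 : ((2 * c : ℕ) : k) ≠ 0 := Nat.cast_ne_zero.mpr (by omega)
        push_cast at h3
        exact h3
      refine ⟨(-(2 * (c : k))⁻¹) • C (coeff 0 f), 0, ?_, fun _ => rfl⟩
      rw [map_zero, add_zero, L_smul, L_C, smul_neg, neg_smul, neg_neg, smul_smul,
        inv_mul_cancel₀ hs, one_smul, ← hC]
  | succ m ih =>
    intro f hf
    by_cases hle : f.totalDegree ≤ m
    · exact ih f hle
    · have hM : f.totalDegree = m + 1 := by omega
      set M := f.totalDegree with hMdef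
      set F := homogeneousComponent M f with hFdef
      set s : k := (2 * ((M : k) + (c : k)))⁻¹ with hsdef
      have hs0 : (2 * ((M : k) + (c : k))) ≠ 0 := by
        have h3 : ((2 * (M + c) : ℕ) : k) ≠ 0 := Nat.cast_ne_zero.mpr (by omega)
        push_cast at h3
        exact h3
      have hEF : Efn F = M • F := Efn_hc M f
      have hLF : L c F = Dl F - ((2 * ((M : k) + (c : k))) • F) := by
        rw [L_eq, hEF, two_mul_eq_smul, ← Nat.cast_smul_eq_nsmul k M F, smul_smul, sub_sub,
          ← add_smul]
        congr 1
        ring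
      have hLg0 : L c (-(s • F)) = -(s • Dl F) + F := by
        rw [show -(s • F) = (-s) • F from (neg_smul s F).symm, L_smul, hLF]
        match_scalars
        · ring
        · have : (2 * ((M : k) + (c : k)))⁻¹ * (2 * ((M : k) + (c : k))) = 1 :=
            inv_mul_cancel₀ hs0
          linear_combination this
      have hFhom : F.totalDegree ≤ M := (homogeneousComponent_isHomogeneous M f).totalDegree_le
      have hDlF : (Dl F).totalDegree ≤ m := by
        have := totalDegree_Dl_le F
        omega
      have hfF : (f - F).totalDegree ≤ m := by
        rw [totalDegree]
        refine Finset.sup_le fun d hd => ?_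
        have hco : coeff d f - coeff d F ≠ 0 := by
          rw [← coeff_sub]
          exact mem_support_iff.mp hd
        have hcF : coeff d F = if d.degree = M then coeff d f else 0 :=
          coeff_homogeneousComponent M f d
        by_cases hdm : d.degree = M
        · rw [hcF, if_pos hdm] at hco
          simp at hco
        · have hcf : coeff d f ≠ 0 := by
            rw [hcF, if_neg hdm, sub_zero] at hco
            exact hco
          have : (d.sum fun _ e => e) ≤ M := le_totalDegree (mem_support_iff.mpr hcf)
          rw [fsum_eq_degree] at this ⊢
          omega
      have hrem : (f - L c (-(s • F))).totalDegree ≤ m := by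
        have hrw : f - L c (-(s • F)) = (f - F) + s • Dl F := by
          rw [hLg0]
          abel
        rw [hrw]
        exact (totalDegree_add _ _).trans
          (max_le hfF ((totalDegree_smul_le _ _).trans hDlF))
      obtain ⟨g₁, r, hg₁, hr⟩ := ih (f - L c (-(s • F))) hrem
      refine ⟨-(s • F) + g₁, r, ?_, hr⟩
      rw [L_add, add_assoc, ← hg₁]
      abel


/-! ### the Gaussian functional -/

noncomputable def mu (k : Type*) [Field k] (t : ℕ) : k :=
  if Even t then ((Nat.doubleFactorial (t - 1)) : k) / 2 ^ (t / 2) else 0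

noncomputable def wt (k : Type*) [Field k] {n : ℕ} (d : Fin n →₀ ℕ) : k :=
  ∏ i : Fin n, mu k (d i)

noncomputable def phi : MvPolynomial (Fin n) k →ₗ[k] k :=
  Finsupp.linearCombination k (wt k) ∘ₗ (AddMonoidAlgebra.coeffLinearEquiv k).toLinearMap

lemma phi_monomial (d : Fin n →₀ ℕ) (a : k) : phi (monomial d a) = a * wt k d := by
  unfold phi
  rw [← single_eq_monomial]
  exact (Finsupp.linearCombination_single k a d).trans (by rw [smul_eq_mul])

lemma mu_zero : mu k 0 = 1 := by
  rw [mu, if_pos Even.zero]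
  norm_num [Nat.doubleFactorial]

lemma mu_step (t : ℕ) : (t : k) * mu k (t - 1) = 2 * mu k (t + 1) := by
  rcases Nat.even_or_odd t with he | ho
  · have h1 : ¬ Even (t + 1) := by simp [Nat.even_add_one, he]
    rcases Nat.eq_zero_or_pos t with rfl | hpos
    · simp [mu, h1]
    · have h2 : ¬ Even (t - 1) := by
        rintro ⟨v, hv⟩
        obtain ⟨u, hu⟩ := he
        omega
      simp [mu, h1, h2]
  · obtain ⟨u, hu⟩ := ho
    subst hu
    have d1 : (2 * u + 1 - 1) = 2 * u := by omega
    have d2 : (2 * u + 1 + 1) = 2 * u + 2 := by omega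
    rw [d1, d2]
    have m1 : mu k (2 * u) = ((Nat.doubleFactorial (2 * u - 1)) : k) / 2 ^ u := by
      rw [mu, if_pos ⟨u, by omega⟩]
      rw [show (2 * u) / 2 = u by omega]
    have m2 : mu k (2 * u + 2) = ((Nat.doubleFactorial (2 * u + 1)) : k) / 2 ^ (u + 1) := by
      rw [mu, if_pos ⟨u + 1, by omega⟩]
      rw [show (2 * u + 2) / 2 = u + 1 by omega, show 2 * u + 2 - 1 = 2 * u + 1 by omega]
    rw [m1, m2]
    have hd : (Nat.doubleFactorial (2 * u + 1)) = (2 * u + 1) * Nat.doubleFactorial (2 * u - 1) := by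
      rcases u with _ | v
      · simp [Nat.doubleFactorial]
      · rw [show 2 * (v + 1) + 1 = (2 * v + 1) + 2 by ring, Nat.doubleFactorial_add_two,
          show 2 * (v + 1) - 1 = 2 * v + 1 by omega]
    rw [hd]
    have hpow : (2 : k) ^ (u + 1) ≠ 0 := pow_ne_zero _ (by norm_num)
    have hpow' : (2 : k) ^ u ≠ 0 := pow_ne_zero _ (by norm_num)
    push_cast
    field_simp
    ring

lemma phi_C (e : k) : phi (C e : MvPolynomial (Fin n) k) = e := by
  rw [show (C e : MvPolynomial (Fin n) k) = monomial 0 e from rfl, phi_monomial]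
  have : wt k (0 : Fin n →₀ ℕ) = 1 := by
    simp [wt, mu_zero]
  rw [this, mul_one]

lemma phi_P_mono (i : Fin n) (d : Fin n →₀ ℕ) (a : k) :
    phi (pderiv i (monomial d a)) = phi (2 * (X i * monomial d a)) := by
  rw [pderiv_monomial, phi_monomial, X, monomial_mul, one_mul, two_mul_eq_smul,
    ← map_smul, phi_monomial, smul_eq_mul]
  have w1 : wt k (d - Finsupp.single i 1) =
      mu k (d i - 1) * ∏ j ∈ Finset.univ.erase i, mu k (d j) := by
    rw [wt, ← Finset.mul_prod_erase _ _ (Finset.mem_univ i), Finsupp.tsub_apply,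
      Finsupp.single_eq_same]
    congr 1
    refine Finset.prod_congr rfl fun j hj => ?_
    rw [Finsupp.tsub_apply, Finsupp.single_eq_of_ne' (Ne.symm (Finset.mem_erase.mp hj).1),
      Nat.sub_zero]
  have w2 : wt k (Finsupp.single i 1 + d) =
      mu k (d i + 1) * ∏ j ∈ Finset.univ.erase i, mu k (d j) := by
    rw [wt, ← Finset.mul_prod_erase _ _ (Finset.mem_univ i), Finsupp.add_apply,
      Finsupp.single_eq_same, add_comm 1 (d i)]
    congr 1
    refine Finset.prod_congr rfl fun j hj => ?_
    rw [Finsupp.add_apply, Finsupp.single_eq_of_ne' (Ne.symm (Finset.mem_erase.mp hj).1),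
      zero_add]
  rw [w1, w2]
  linear_combination (a * ∏ j ∈ Finset.univ.erase i, mu k (d j)) * mu_step (k := k) (d i)

lemma phi_P (i : Fin n) (g : MvPolynomial (Fin n) k) : phi (P i g) = 0 := by
  suffices h : phi (pderiv i g) = phi (2 * (X i * g)) by
    rw [P, map_sub, h, sub_self]
  conv_lhs => rw [← support_sum_monomial_coeff g]
  conv_rhs => rw [← support_sum_monomial_coeff g]
  rw [map_sum, map_sum, Finset.mul_sum, Finset.mul_sum, map_sum]
  exact Finset.sum_congr rfl fun d _ => phi_P_mono i d (coeff d g)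


/-! ### glue -/

noncomputable def topForm' (k : Type*) [CommRing k] (n : ℕ) : PolyForms k n :=
  fun S => if S = Finset.univ then 1 else 0

lemma tdr_add (a b : PolyForms k n) :
    twistedDeRham (a + b) = twistedDeRham a + twistedDeRham b := by
  funext T
  rw [Pi.add_apply, tdr_eq, tdr_eq, tdr_eq, ← Finset.sum_add_distrib]
  refine Finset.sum_congr rfl fun i _ => ?_
  rw [Pi.add_apply, P_add, smul_add]

lemma tdr_smul (c : k) (a : PolyForms k n) :
    twistedDeRham (c • a) = c • twistedDeRham a := by
  funext T
  rw [Pi.smul_apply, tdr_eq, tdr_eq, Finset.smul_sum]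
  refine Finset.sum_congr rfl fun i _ => ?_
  rw [Pi.smul_apply, P_smul, smul_comm]

lemma tdr_top : twistedDeRham (topForm' k n) = 0 := by
  funext T
  rw [tdr_eq]
  refine Finset.sum_eq_zero fun i hi => ?_
  have hne : T.erase i ≠ Finset.univ := fun h => (Finset.notMem_erase i T) (h ▸ Finset.mem_univ i)
  rw [show topForm' k n (T.erase i) = 0 from if_neg hne, P_zero, smul_zero]

lemma hOp_zero : hOp (0 : PolyForms k n) = 0 := by
  funext S
  rw [hOp_eq]
  refine Finset.sum_eq_zero fun i _ => ?_
  rw [Pi.zero_apply, map_zero, smul_zero]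

lemma hOp_smul_top (e : k) : hOp (e • topForm' k n) = 0 := by
  funext S
  rw [hOp_eq]
  refine Finset.sum_eq_zero fun i _ => ?_
  have hval : (e • topForm' k n) (insert i S) = C (if insert i S = Finset.univ then e else 0) := by
    rw [Pi.smul_apply]
    by_cases h : insert i S = Finset.univ
    · rw [show topForm' k n (insert i S) = 1 from if_pos h, if_pos h, smul_eq_C_mul, mul_one]
    · rw [show topForm' k n (insert i S) = 0 from if_neg h, if_neg h, smul_zero, map_zero]
  rw [hval, pderiv_C, smul_zero]

lemma phi_tdr_univ (b : PolyForms k n) : phi ((twistedDeRham b) Finset.univ) = 0 := by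
  rw [tdr_eq, map_sum]
  refine Finset.sum_eq_zero fun i _ => ?_
  rw [map_smul, phi_P, smul_zero]

lemma phi_top : phi ((topForm' k n) Finset.univ) = 1 := by
  rw [show (topForm' k n) Finset.univ = 1 from if_pos rfl, ← C_1, phi_C]

lemma main_decomp (a : PolyForms k n) (ha : twistedDeRham a = 0) :
    ∃ (c : k) (b : PolyForms k n), a = c • topForm' k n + twistedDeRham b := by
  classical
  have H : ∀ S : Finset (Fin n), ∃ g r, a S = L (Sᶜ.card) g + C r ∧ ((Sᶜ.card) ≠ 0 → r = 0) :=
    fun S => L_solve _ ((a S).totalDegree) (a S) le_rfl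
  choose w r hw hr using H
  set c := r Finset.univ with hc
  have hdecomp : a = (c • topForm' k n) + fun S => L (Sᶜ.card) (w S) := by
    funext S
    rw [Pi.add_apply, Pi.smul_apply]
    by_cases hS : S = Finset.univ
    · subst hS
      rw [hw, show topForm' k n Finset.univ = 1 from if_pos rfl, smul_eq_C_mul, mul_one,
        add_comm]
    · have hcard : (Sᶜ).card ≠ 0 := by
        intro h
        exact hS (by simpa [Finset.compl_eq_empty_iff] using Finset.card_eq_zero.mp h)
      rw [hw S, hr S hcard, map_zero, add_zero,
        show topForm' k n S = 0 from if_neg hS, smul_zero, zero_add]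
  have hK : (fun S => L (Sᶜ.card) (w S)) = twistedDeRham (hOp w) + hOp (twistedDeRham w) := by
    funext S
    rw [Pi.add_apply, homotopy]
  have hDa0 : twistedDeRham (fun S => L (Sᶜ.card) (w S)) = 0 := by
    have h1 := congrArg twistedDeRham hdecomp
    rw [ha, tdr_add, tdr_smul, tdr_top, smul_zero, zero_add] at h1
    exact h1.symm
  have hDK : twistedDeRham (twistedDeRham (hOp w) + hOp (twistedDeRham w))
      = (fun S => L (Sᶜ.card) ((twistedDeRham w) S)) := by
    rw [tdr_add, DD (hOp w), zero_add]
    funext S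
    have h2 := homotopy (twistedDeRham w) S
    rw [DD w, hOp_zero, Pi.zero_apply, add_zero] at h2
    exact h2
  have hLDw : ∀ S, L (Sᶜ.card) ((twistedDeRham w) S) = 0 := by
    intro S
    have h3 : (fun S => L (Sᶜ.card) ((twistedDeRham w) S)) = (0 : PolyForms k n) := by
      rw [← hDK, ← hK, hDa0]
    exact congrFun h3 S
  set e := coeff 0 ((twistedDeRham w) Finset.univ) with he
  have hDw : twistedDeRham w = e • topForm' k n := by
    funext S
    rcases L_ker (hLDw S) with ⟨h1, h2⟩
    by_cases hS : S = Finset.univ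
    · subst hS
      rw [Pi.smul_apply, show topForm' k n Finset.univ = 1 from if_pos rfl,
        smul_eq_C_mul, mul_one]
      exact h1
    · have hcard : (Sᶜ).card ≠ 0 := by
        intro h
        exact hS (by simpa [Finset.compl_eq_empty_iff] using Finset.card_eq_zero.mp h)
      rw [h2 hcard, Pi.smul_apply, show topForm' k n S = 0 from if_neg hS, smul_zero]
  refine ⟨c, hOp w, ?_⟩
  calc a = c • topForm' k n + (twistedDeRham (hOp w) + hOp (twistedDeRham w)) := by
        rw [hdecomp, hK]
    _ = c • topForm' k n + twistedDeRham (hOp w) := by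
        rw [hDw, hOp_smul_top, add_zero]

end TDR

/-- `D ∘ D = 0`, and the cohomology of the twisted de Rham complex `(Ω^•, D)` of
polynomial forms is concentrated in top degree `n`, where it is one-dimensional, spanned
by the class of `dx₁∧⋯∧dxₙ`: every closed `p`-form with `p < n` is exact, the top form
is closed and not exact, and every closed form is, modulo exact ones, a scalar multiple
of the top form. -/
theorem twistedDeRham_cohomology (k : Type*) [Field k] [CharZero k] (n : ℕ) :
    (∀ a : PolyForms k n, twistedDeRham (twistedDeRham a) = 0) ∧
    (∀ p : ℕ, p < n → ∀ a : PolyForms k n, FormDegree p a → twistedDeRham a = 0 →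
      ∃ b : PolyForms k n, a = twistedDeRham b) ∧
    twistedDeRham (topForm k n) = 0 ∧
    (¬ ∃ b : PolyForms k n, topForm k n = twistedDeRham b) ∧
    (∀ a : PolyForms k n, twistedDeRham a = 0 →
      ∃ (c : k) (b : PolyForms k n), a = c • topForm k n + twistedDeRham b) := by
  have htop : topForm k n = TDR.topForm' k n := rfl
  refine ⟨TDR.DD, ?_, ?_, ?_, ?_⟩
  · intro p hp a hdeg ha
    obtain ⟨c, b, hab⟩ := TDR.main_decomp a ha
    have h0 : a Finset.univ = 0 := by
      by_contra h
      have hcard := hdeg Finset.univ h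
      rw [Finset.card_univ, Fintype.card_fin] at hcard
      omega
    have hphi : TDR.phi (a Finset.univ) = c := by
      rw [hab, Pi.add_apply, map_add, TDR.phi_tdr_univ, add_zero, Pi.smul_apply, map_smul,
        TDR.phi_top, smul_eq_mul, mul_one]
    have hc0 : c = 0 := by rw [← hphi, h0, map_zero]
    exact ⟨b, by rw [hab, hc0, zero_smul, zero_add]⟩
  · rw [htop]; exact TDR.tdr_top
  · rintro ⟨b, hb⟩
    have h2 := congrArg (fun x : PolyForms k n => TDR.phi (x Finset.univ)) hb
    simp only [htop] at h2
    rw [TDR.phi_top, TDR.phi_tdr_univ] at h2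
    exact one_ne_zero h2
  · intro a ha
    rw [htop]
    exact TDR.main_decomp a ha
end
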